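/- Consider the blind 3-state POMDP of Example F2: S = {0,1,2}, A = {0,1}, no observations. Under action 0: states 0 and 2 are absorbing, state 1 moves to 0 or 2 each with probability 1/2; rewards r(·,0) = (−1, 0, 2). Under action 1: state 1 is absorbing, states 0 and 2 each stay with probability 1/2 and move to 1 with probability 1/2; reward r(s,1) = −0.5 for all s. The system starts in state 0 and γ = 0.9. For p ∈ [0,1], let π_p be the stationary policy that picks action 1 with probability p each period, with value J(p) = [(I − γP_p)^{-1} r_p]₀ where P_p = (1−p)P₀ + pP₁ and r_p = (1−p)r₀ + p r₁. Then there exists p ∈ (0,1) with J(p) > max(J(0), J(1)); i.e., the best stationary stochastic memoryless policy strictly outperforms every stationary deterministic memoryless policy. -/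

import Mathlib

open Matrix

/-- In the blind 3-state POMDP of Example F2 (γ = 0.9, start in state 0), some stationary
stochastic memoryless policy `π_p`, `p ∈ (0,1)`, strictly outperforms both deterministic
stationary memoryless policies. -/
theorem stmt_11
    (P0 : Matrix (Fin 3) (Fin 3) ℝ) (hP0 : P0 = !![1, 0, 0; 1/2, 0, 1/2; 0, 0, 1])
    (P1 : Matrix (Fin 3) (Fin 3) ℝ) (hP1 : P1 = !![1/2, 1/2, 0; 0, 1, 0; 0, 1/2, 1/2])
    (r0 : Fin 3 → ℝ) (hr0 : r0 = ![-1, 0, 2])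
    (r1 : Fin 3 → ℝ) (hr1 : r1 = ![-0.5, -0.5, -0.5])
    (γ : ℝ) (hγ : γ = 0.9)
    (J : ℝ → ℝ)
    (hJ : ∀ p : ℝ, J p =
      ((1 - γ • ((1 - p) • P0 + p • P1))⁻¹ *ᵥ ((1 - p) • r0 + p • r1)) 0) :
    ∃ p : ℝ, 0 < p ∧ p < 1 ∧ J p > max (J 0) (J 1) := by
  subst hP0 hP1 hr0 hr1 hγ
  have mk : ∀ (p : ℝ) (B : Matrix (Fin 3) (Fin 3) ℝ),
      (1 - (0.9 : ℝ) • ((1 - p) • !![(1:ℝ), 0, 0; 1/2, 0, 1/2; 0, 0, 1]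
        + p • !![(1:ℝ)/2, 1/2, 0; 0, 1, 0; 0, 1/2, 1/2])) * B = 1 →
      J p = (B *ᵥ ((1 - p) • ![(-1:ℝ), 0, 2] + p • ![(-0.5:ℝ), -0.5, -0.5])) 0 := by
    intro p B hB
    rw [hJ p, Matrix.inv_eq_right_inv hB]
  have h0 : J 0 = -10 := by
    rw [mk 0 !![(10:ℝ), 0, 0; 9/2, 1, 9/2; 0, 0, 10] ?_]
    · norm_num [Matrix.mulVec, dotProduct, Fin.sum_univ_three, Matrix.cons_val_two]
    · ext i j
      fin_cases i <;> fin_cases j <;>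
        norm_num [Matrix.mul_apply, Fin.sum_univ_three, Matrix.one_fin_three, Matrix.vecHead, Matrix.vecTail, Matrix.cons_val_two]
  have h1 : J 1 = -5 := by
    rw [mk 1 !![(20:ℝ)/11, 90/11, 0; 0, 10, 0; 0, 90/11, 20/11] ?_]
    · norm_num [Matrix.mulVec, dotProduct, Fin.sum_univ_three, Matrix.cons_val_two]
    · ext i j
      fin_cases i <;> fin_cases j <;>
        norm_num [Matrix.mul_apply, Fin.sum_univ_three, Matrix.one_fin_three, Matrix.vecHead, Matrix.vecTail, Matrix.cons_val_two]
  have h2 : J (1/2) = -2445/806 := by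
    rw [mk (1/2) !![(2050:ℝ)/403, 90/31, 810/403; 90/31, 130/31, 90/31;
        810/403, 90/31, 2050/403] ?_]
    · norm_num [Matrix.mulVec, dotProduct, Fin.sum_univ_three, Matrix.cons_val_two]
    · ext i j
      fin_cases i <;> fin_cases j <;>
        norm_num [Matrix.mul_apply, Fin.sum_univ_three, Matrix.one_fin_three, Matrix.vecHead, Matrix.vecTail, Matrix.cons_val_two]
  refine ⟨1/2, by norm_num, by norm_num, ?_⟩
  rw [h0, h1, h2]
  norm_num
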